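/- Let T be a κ-strict pseudo-contraction with fixed point p and (xₙ) the Mann iteration with λₙ ∈ (κ,1). Then ∑_{n=0}^{∞} (λₙ-κ)(1-λₙ)‖xₙ - Txₙ‖² ≤ ‖x₀ - p‖², in particular the series converges. -/

import Mathlib

lemma convex_norm_sq_id {H : Type*} [NormedAddCommGroup H] [InnerProductSpace ℝ H]
    (a b : H) (t : ℝ) :
    ‖t • a + (1 - t) • b‖ ^ 2
      = t * ‖a‖ ^ 2 + (1 - t) * ‖b‖ ^ 2 - t * (1 - t) * ‖a - b‖ ^ 2 := by
  have h : ∀ y : H, ‖y‖ ^ 2 = (inner ℝ y y : ℝ) := fun y => (real_inner_self_eq_norm_sq y).symm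
  rw [h, h a, h b, h (a - b)]
  simp only [inner_add_add_self, inner_sub_sub_self, real_inner_smul_left,
    real_inner_smul_right, real_inner_comm a b]
  ring

theorem stmt_14 {H : Type*} [NormedAddCommGroup H] [InnerProductSpace ℝ H]
    (C : Set H) (hCne : C.Nonempty) (hCconv : Convex ℝ C)
    (κ : ℝ) (hκ0 : 0 ≤ κ) (hκ1 : κ < 1)
    (T : H → H) (hTmap : Set.MapsTo T C C)
    (hT : ∀ u ∈ C, ∀ v ∈ C,
      ‖T u - T v‖ ^ 2 ≤ ‖u - v‖ ^ 2 + κ * ‖(u - T u) - (v - T v)‖ ^ 2)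
    (p : H) (hp : p ∈ C) (hfix : T p = p)
    (lam : ℕ → ℝ) (hlam : ∀ n, lam n ∈ Set.Ioo κ 1)
    (x : ℕ → H) (hx0 : x 0 ∈ C)
    (hxrec : ∀ n, x (n + 1) = lam n • x n + (1 - lam n) • T (x n)) :
    Summable (fun n : ℕ => (lam n - κ) * (1 - lam n) * ‖x n - T (x n)‖ ^ 2) ∧
      ∑' n : ℕ, (lam n - κ) * (1 - lam n) * ‖x n - T (x n)‖ ^ 2
        ≤ ‖x 0 - p‖ ^ 2 := by
  have hmem : ∀ n, x n ∈ C := by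
    intro n
    induction n with
    | zero => exact hx0
    | succ n ih =>
      rw [hxrec n]
      exact hCconv ih (hTmap ih) (le_of_lt (lt_of_le_of_lt hκ0 (hlam n).1))
        (by linarith [(hlam n).2]) (by ring)
  -- one-step estimate
  have hstep : ∀ n, (lam n - κ) * (1 - lam n) * ‖x n - T (x n)‖ ^ 2
      ≤ ‖x n - p‖ ^ 2 - ‖x (n + 1) - p‖ ^ 2 := by
    intro n
    have hTn : ‖T (x n) - p‖ ^ 2 ≤ ‖x n - p‖ ^ 2 + κ * ‖x n - T (x n)‖ ^ 2 := by
      have := hT (x n) (hmem n) p hp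
      rw [hfix] at this
      simpa using this
    have hid : ‖x (n + 1) - p‖ ^ 2
        = lam n * ‖x n - p‖ ^ 2 + (1 - lam n) * ‖T (x n) - p‖ ^ 2
          - lam n * (1 - lam n) * ‖x n - T (x n)‖ ^ 2 := by
      have : x (n + 1) - p = lam n • (x n - p) + (1 - lam n) • (T (x n) - p) := by
        rw [hxrec n]; module
      rw [this, convex_norm_sq_id]
      congr 2
      abel_nf
    have h1 : 0 ≤ 1 - lam n := by linarith [(hlam n).2]
    nlinarith [mul_le_mul_of_nonneg_left hTn h1]
  have hnonneg : ∀ n, 0 ≤ (lam n - κ) * (1 - lam n) * ‖x n - T (x n)‖ ^ 2 := by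
    intro n
    have h1 := (hlam n).1
    have h2 := (hlam n).2
    have : (0:ℝ) ≤ (lam n - κ) * (1 - lam n) :=
      mul_nonneg (by linarith) (by linarith)
    positivity
  have hpart : ∀ n, ∑ i ∈ Finset.range n,
      (lam i - κ) * (1 - lam i) * ‖x i - T (x i)‖ ^ 2 ≤ ‖x 0 - p‖ ^ 2 := by
    intro n
    calc ∑ i ∈ Finset.range n, (lam i - κ) * (1 - lam i) * ‖x i - T (x i)‖ ^ 2
        ≤ ∑ i ∈ Finset.range n, (‖x i - p‖ ^ 2 - ‖x (i + 1) - p‖ ^ 2) :=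
          Finset.sum_le_sum fun i _ => hstep i
      _ = ‖x 0 - p‖ ^ 2 - ‖x n - p‖ ^ 2 := by
          rw [Finset.sum_range_sub' (fun i => ‖x i - p‖ ^ 2)]
      _ ≤ ‖x 0 - p‖ ^ 2 := by nlinarith [sq_nonneg ‖x n - p‖]
  have hsum : Summable (fun n : ℕ => (lam n - κ) * (1 - lam n) * ‖x n - T (x n)‖ ^ 2) :=
    summable_of_sum_range_le hnonneg hpart
  exact ⟨hsum, Summable.tsum_le_of_sum_range_le hsum hpart⟩
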